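/- For any y ∈ W, Σ_{z ∈ I_*} X^z_y = u^{2l(y)}, where the sum has only finitely many nonzero terms (indeed X^z_y = 0 whenever l(z) > 2l(y)). -/

import Mathlib

open Polynomial
open scoped Classical

/-- The characterization (Proposition 1.2) of the polynomials `X^z_y ∈ ℤ[u]`, indexed by pairs
`(z, y)` with `z` a twisted involution (`st z = z⁻¹`) and `y ∈ W`: `X^z_1 = δ_{z,1}`, and for
`s ∈ S`, `y > ys`, the recursions 1.2(i)–(iv) hold. -/
def XRec {B W : Type} [Group W] {M : CoxeterMatrix B} (cs : CoxeterSystem M W)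
    (st : W ≃* W) (P : {z : W // st z = z⁻¹} → W → Polynomial ℤ) : Prop :=
  (∀ z : {z : W // st z = z⁻¹}, P z 1 = if z.1 = 1 then 1 else 0) ∧
  ∀ (i : B) (y : W), cs.length (y * cs.simple i) < cs.length y →
    ∀ z : {z : W // st z = z⁻¹},
      (cs.simple i * z.1 = z.1 * st (cs.simple i) →
        cs.length z.1 < cs.length (cs.simple i * z.1) →
        ∀ h : st (cs.simple i * z.1) = (cs.simple i * z.1)⁻¹,
          P z y = X * P z (y * cs.simple i) +
            (X + 1) * P ⟨cs.simple i * z.1, h⟩ (y * cs.simple i)) ∧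
      (cs.simple i * z.1 = z.1 * st (cs.simple i) →
        cs.length (cs.simple i * z.1) < cs.length z.1 →
        ∀ h : st (cs.simple i * z.1) = (cs.simple i * z.1)⁻¹,
          P z y = (X ^ 2 - X - 1) * P z (y * cs.simple i) +
            (X ^ 2 - X) * P ⟨cs.simple i * z.1, h⟩ (y * cs.simple i)) ∧
      (cs.simple i * z.1 ≠ z.1 * st (cs.simple i) →
        cs.length z.1 < cs.length (cs.simple i * z.1) →
        ∀ h : st (cs.simple i * z.1 * st (cs.simple i)) =
            (cs.simple i * z.1 * st (cs.simple i))⁻¹,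
          P z y = P ⟨cs.simple i * z.1 * st (cs.simple i), h⟩ (y * cs.simple i)) ∧
      (cs.simple i * z.1 ≠ z.1 * st (cs.simple i) →
        cs.length (cs.simple i * z.1) < cs.length z.1 →
        ∀ h : st (cs.simple i * z.1 * st (cs.simple i)) =
            (cs.simple i * z.1 * st (cs.simple i))⁻¹,
          P z y = (X ^ 2 - 1) * P z (y * cs.simple i) +
            X ^ 2 * P ⟨cs.simple i * z.1 * st (cs.simple i), h⟩ (y * cs.simple i))

namespace StCox

open CoxeterSystem List

variable {B W : Type} [Group W] {M : CoxeterMatrix B} (cs : CoxeterSystem M W)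

private lemma conj_eq_iff {G : Type*} [Group G] (a t c : G) :
    a * t * a⁻¹ = c ↔ t = a⁻¹ * c * a :=
  ⟨fun h => by rw [← h]; group, fun h => by rw [h]; group⟩

private lemma sign_helper (c1 c2 : Prop) [Decidable c1] [Decidable c2] (e p : ℤˣ) :
    (if c2 then -(if c1 then -(e * p) else e * p) else (if c1 then -(e * p) else e * p))
      = e * ((p * (if c1 then (-1 : ℤˣ) else 1)) * (if c2 then (-1 : ℤˣ) else 1)) := by
  by_cases h1 : c1 <;> by_cases h2 : c2 <;> simp [h1, h2, mul_assoc]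

private lemma conj_pow {G : Type*} [Group G] {x q : G} (hx : x * x = 1)
    (hxq : x * q * x = q⁻¹) (n : ℕ) : x * q ^ n * x = (q ^ n)⁻¹ := by
  induction n with
  | zero => simpa using hx
  | succ n ih =>
      have key : (x * q * x) * (x * q ^ n * x) = x * q ^ (n + 1) * x := by
        rw [pow_succ']
        calc (x * q * x) * (x * q ^ n * x) = x * q * (x * x) * q ^ n * x := by
              simp [mul_assoc]
          _ = x * (q * q ^ n) * x := by rw [hx]; simp [mul_assoc]
      rw [← key, hxq, ih, pow_succ, mul_inv_rev]

/-- The Bjorner–Brenti sign permutation attached to a simple generator. -/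
noncomputable def eta (i : B) : Equiv.Perm (W × ℤˣ) :=
  Function.Involutive.toPerm
    (fun p => (cs.simple i * p.1 * cs.simple i, if p.1 = cs.simple i then -p.2 else p.2))
    (by
      rintro ⟨t, ε⟩
      have hss : cs.simple i * cs.simple i = 1 := cs.simple_mul_simple_self i
      have h1 : cs.simple i * (cs.simple i * t * cs.simple i) * cs.simple i = t := by
        calc cs.simple i * (cs.simple i * t * cs.simple i) * cs.simple i
            = (cs.simple i * cs.simple i) * t * (cs.simple i * cs.simple i) := by
              simp [mul_assoc]
          _ = t := by rw [hss]; simp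
      have h2 : (cs.simple i * t * cs.simple i = cs.simple i) ↔ t = cs.simple i := by
        constructor
        · intro h
          have := congrArg (fun w => cs.simple i * w * cs.simple i) h
          rw [h1] at this
          rw [this]
          calc cs.simple i * cs.simple i * cs.simple i = 1 * cs.simple i := by rw [hss]
            _ = cs.simple i := one_mul _
        · intro h
          rw [h, hss, one_mul]
      simp only [Prod.mk.injEq]
      refine ⟨h1, ?_⟩
      by_cases h : t = cs.simple i
      · simp [h, h2, hss]
      · simp [h, h2])

lemma eta_apply (i : B) (p : W × ℤˣ) :
    eta cs i p = (cs.simple i * p.1 * cs.simple i, if p.1 = cs.simple i then -p.2 else p.2) :=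
  rfl

/-- The sequence of "roots" appearing as flip conditions in powers of `eta i * eta j`. -/
noncomputable def rho (i j : B) (k : ℕ) : W :=
  ((cs.simple i * cs.simple j) ^ (k / 2))⁻¹ *
    (if Even k then cs.simple j else cs.simple j * cs.simple i * cs.simple j) *
    (cs.simple i * cs.simple j) ^ (k / 2)

lemma rho_two_mul (i j : B) (n : ℕ) :
    rho cs i j (2 * n) =
      ((cs.simple i * cs.simple j) ^ n)⁻¹ * cs.simple j * (cs.simple i * cs.simple j) ^ n := by
  have h : (2 * n) / 2 = n := by omega
  simp [rho, h, even_two_mul]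

lemma rho_two_mul_add_one (i j : B) (n : ℕ) :
    rho cs i j (2 * n + 1) =
      ((cs.simple i * cs.simple j) ^ n)⁻¹ *
        (cs.simple j * cs.simple i * cs.simple j) * (cs.simple i * cs.simple j) ^ n := by
  have h : (2 * n + 1) / 2 = n := by omega
  have h2 : ¬ Even (2 * n + 1) := by simp [Nat.even_add_one, even_two_mul]
  simp [rho, h, h2]

lemma eta_pow_apply (i j : B) (n : ℕ) (t : W) (ε : ℤˣ) :
    ((eta cs i * eta cs j) ^ n) (t, ε) =
      ((cs.simple i * cs.simple j) ^ n * t * ((cs.simple i * cs.simple j) ^ n)⁻¹,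
        ε * ∏ k ∈ Finset.range (2 * n), (if t = rho cs i j k then (-1 : ℤˣ) else 1)) := by
  induction n with
  | zero => simp
  | succ n ih =>
      rw [pow_succ', Equiv.Perm.mul_apply, ih, Equiv.Perm.mul_apply, eta_apply, eta_apply]
      simp only [Prod.mk.injEq]
      set q := cs.simple i * cs.simple j with hq
      have hc1 : (q ^ n * t * (q ^ n)⁻¹ = cs.simple j) ↔ t = rho cs i j (2 * n) := by
        rw [conj_eq_iff, rho_two_mul]
      have hc2 : (cs.simple j * (q ^ n * t * (q ^ n)⁻¹) * cs.simple j = cs.simple i) ↔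
          t = rho cs i j (2 * n + 1) := by
        have e1 : cs.simple j * (q ^ n * t * (q ^ n)⁻¹) * cs.simple j
            = (cs.simple j * q ^ n) * t * (cs.simple j * q ^ n)⁻¹ := by
          rw [mul_inv_rev, cs.inv_simple]
          simp [mul_assoc]
        rw [e1, conj_eq_iff, rho_two_mul_add_one, mul_inv_rev, cs.inv_simple]
        constructor <;> intro h <;> rw [h] <;> simp [mul_assoc, hq]
      constructor
      · rw [pow_succ' q n, hq]
        rw [mul_inv_rev, mul_inv_rev, cs.inv_simple, cs.inv_simple]
        simp [mul_assoc]
      · have hprod : ∏ k ∈ Finset.range (2 * (n + 1)),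
            (if t = rho cs i j k then (-1 : ℤˣ) else 1)
            = (∏ k ∈ Finset.range (2 * n), (if t = rho cs i j k then (-1 : ℤˣ) else 1))
              * (if t = rho cs i j (2 * n) then (-1 : ℤˣ) else 1)
              * (if t = rho cs i j (2 * n + 1) then (-1 : ℤˣ) else 1) := by
          have : 2 * (n + 1) = (2 * n + 1) + 1 := by omega
          rw [this, Finset.prod_range_succ, Finset.prod_range_succ]
        rw [hprod]
        simp only [hc1, hc2]
        exact sign_helper _ _ _ _

lemma rho_period (i j : B) (m : ℕ) (hm : (cs.simple i * cs.simple j) ^ m = 1) (k : ℕ) :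
    rho cs i j (k + m) = rho cs i j k := by
  set q := cs.simple i * cs.simple j with hq
  set a := cs.simple j with hadef
  set b := cs.simple j * cs.simple i * cs.simple j with hbdef
  have hss : ∀ l : B, cs.simple l * cs.simple l = 1 := cs.simple_mul_simple_self
  have hqinv : q⁻¹ = cs.simple j * cs.simple i := by
    rw [hq, mul_inv_rev, cs.inv_simple, cs.inv_simple]
  have ha : a * a = 1 := hss j
  have hb : b * b = 1 := by
    rw [hbdef]
    calc cs.simple j * cs.simple i * cs.simple j * (cs.simple j * cs.simple i * cs.simple j)
        = cs.simple j * cs.simple i * (cs.simple j * cs.simple j) * cs.simple i * cs.simple j := by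
          simp [mul_assoc]
      _ = 1 := by rw [hss j]; simp [mul_assoc, hss i, hss j]
  have haq : a * q * a = q⁻¹ := by
    rw [hadef, hq, hqinv]
    calc cs.simple j * (cs.simple i * cs.simple j) * cs.simple j
        = cs.simple j * cs.simple i * (cs.simple j * cs.simple j) := by simp [mul_assoc]
      _ = cs.simple j * cs.simple i := by rw [hss j]; simp
  have hbq : b * q * b = q⁻¹ := by
    rw [hbdef, hq, hqinv]
    calc cs.simple j * cs.simple i * cs.simple j * (cs.simple i * cs.simple j) *
          (cs.simple j * cs.simple i * cs.simple j)
        = cs.simple j * cs.simple i * cs.simple j * cs.simple i *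
            (cs.simple j * cs.simple j) * cs.simple i * cs.simple j := by simp [mul_assoc]
      _ = cs.simple j * cs.simple i * cs.simple j * (cs.simple i * cs.simple i) *
            cs.simple j := by rw [hss j]; simp [mul_assoc]
      _ = cs.simple j * cs.simple i * (cs.simple j * cs.simple j) := by
            rw [hss i]; simp [mul_assoc]
      _ = cs.simple j * cs.simple i := by rw [hss j]; simp
  -- conjugation identities
  have CONJ : ∀ (x : W), x * x = 1 → x * q * x = q⁻¹ →
      ∀ c : ℕ, (q ^ c)⁻¹ * x * q ^ c = x * q ^ (2 * c) := by
    intro x hx hxq c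
    have h1 : x * q ^ c * x = (q ^ c)⁻¹ := conj_pow hx hxq c
    calc (q ^ c)⁻¹ * x * q ^ c = (x * q ^ c * x) * x * q ^ c := by rw [h1]
      _ = x * q ^ c * (x * x) * q ^ c := by simp [mul_assoc]
      _ = x * (q ^ c * q ^ c) := by rw [hx]; simp [mul_assoc]
      _ = x * q ^ (2 * c) := by rw [two_mul, pow_add]
  have key : ∀ (x : W), x * x = 1 → x * q * x = q⁻¹ → ∀ c d : ℕ,
      (q ^ (d + c))⁻¹ * x * q ^ (d + c) = (q ^ d)⁻¹ * (x * q ^ (2 * c)) * q ^ d := by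
    intro x hx hxq c d
    have hcd : q ^ (d + c) = q ^ c * q ^ d := by rw [add_comm, pow_add]
    rw [hcd, mul_inv_rev, ← CONJ x hx hxq c]
    simp [mul_assoc]
  rcases Nat.even_or_odd m with ⟨c, hc⟩ | ⟨c, hc⟩
  · -- m = 2c
    have hq2c : q ^ (2 * c) = 1 := by
      rw [← hm]; congr 1; omega
    rcases Nat.even_or_odd k with ⟨d, hd⟩ | ⟨d, hd⟩
    · have e1 : k + m = 2 * (d + c) := by omega
      have e2 : k = 2 * d := by omega
      rw [e1, e2, rho_two_mul, rho_two_mul, ← hq, ← hadef, key a ha haq, hq2c, mul_one]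
    · have e1 : k + m = 2 * (d + c) + 1 := by omega
      have e2 : k = 2 * d + 1 := by omega
      rw [e1, e2, rho_two_mul_add_one, rho_two_mul_add_one, ← hq, ← hbdef,
        key b hb hbq, hq2c, mul_one]
  · -- m = 2c + 1
    have hq2c : q ^ (2 * c) = q⁻¹ := by
      have h1 : q ^ (2 * c) * q = 1 := by rw [← pow_succ, ← hm]; congr 1; omega
      exact eq_inv_of_mul_eq_one_left h1
    have hba : b * q⁻¹ = a := by
      rw [hbdef, hadef, hqinv]
      calc cs.simple j * cs.simple i * cs.simple j * (cs.simple j * cs.simple i)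
          = cs.simple j * cs.simple i * (cs.simple j * cs.simple j) * cs.simple i := by
            simp [mul_assoc]
        _ = cs.simple j * (cs.simple i * cs.simple i) := by rw [hss j]; simp [mul_assoc]
        _ = cs.simple j := by rw [hss i]; simp
    have hab : a * q = b := by
      rw [hbdef, hadef, hq, hadef]
      simp [mul_assoc]
    rcases Nat.even_or_odd k with ⟨d, hd⟩ | ⟨d, hd⟩
    · -- k = 2d, k + m = 2(d+c)+1
      have e1 : k + m = 2 * (d + c) + 1 := by omega
      have e2 : k = 2 * d := by omega
      rw [e1, e2, rho_two_mul_add_one, rho_two_mul, ← hq, ← hadef, ← hbdef,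
        key b hb hbq, hq2c, hba]
    · -- k = 2d+1, k + m = 2(d+c+1)
      have e1 : k + m = 2 * (d + (c + 1)) := by omega
      have e2 : k = 2 * d + 1 := by omega
      have hq2c1 : q ^ (2 * (c + 1)) = q := by
        have : 2 * (c + 1) = 2 * c + 1 + 1 := by omega
        rw [this, pow_succ, pow_succ, hq2c]
        simp
      rw [e1, e2, rho_two_mul, rho_two_mul_add_one, ← hq, ← hadef, ← hbdef,
        key a ha haq, hq2c1, hab]

lemma eta_liftable : M.IsLiftable (fun i => eta cs i) := by
  intro i j
  refine Equiv.ext fun p => ?_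
  obtain ⟨t, ε⟩ := p
  show ((eta cs i * eta cs j) ^ M.M i j) (t, ε) = (1 : Equiv.Perm (W × ℤˣ)) (t, ε)
  rw [eta_pow_apply, cs.simple_mul_simple_pow i j]
  have hperiod : ∀ k, rho cs i j (k + M i j) = rho cs i j k :=
    rho_period cs i j (M i j) (cs.simple_mul_simple_pow i j)
  have hprod : ∏ k ∈ Finset.range (2 * M i j),
      (if t = rho cs i j k then (-1 : ℤˣ) else 1) = 1 := by
    have h2 : 2 * M i j = M i j + M i j := by omega
    rw [h2, Finset.prod_range_add]
    have : ∀ k, (if t = rho cs i j (M i j + k) then (-1 : ℤˣ) else 1)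
        = (if t = rho cs i j k then (-1 : ℤˣ) else 1) := by
      intro k
      rw [add_comm, hperiod]
    rw [Finset.prod_congr rfl (fun k _ => this k)]
    exact Int.units_mul_self _
  rw [hprod]
  simp

/-- The Bjorner–Brenti sign representation. -/
noncomputable def Theta : W →* Equiv.Perm (W × ℤˣ) :=
  cs.lift ⟨fun i => eta cs i, eta_liftable cs⟩

lemma Theta_simple (i : B) : Theta cs (cs.simple i) = eta cs i :=
  cs.lift_apply_simple (eta_liftable cs) i

lemma Theta_wordProd (ω : List B) (t : W) (ε : ℤˣ) :
    (Theta cs (cs.wordProd ω)) (t, ε) =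
      (cs.wordProd ω * t * (cs.wordProd ω)⁻¹,
        ε * ∏ k ∈ Finset.range ω.length,
          (if t = (cs.rightInvSeq ω).getD k 1 then (-1 : ℤˣ) else 1)) := by
  induction ω generalizing ε with
  | nil => simp
  | cons i ω ih =>
      rw [cs.wordProd_cons, map_mul, Theta_simple, Equiv.Perm.mul_apply, ih, eta_apply]
      simp only [Prod.mk.injEq]
      have hcond : (cs.wordProd ω * t * (cs.wordProd ω)⁻¹ = cs.simple i) ↔
          t = (cs.wordProd ω)⁻¹ * cs.simple i * cs.wordProd ω := conj_eq_iff _ _ _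
      constructor
      · rw [mul_inv_rev, cs.inv_simple]
        simp [mul_assoc]
      · have hris : cs.rightInvSeq (i :: ω)
            = ((cs.wordProd ω)⁻¹ * cs.simple i * cs.wordProd ω) :: cs.rightInvSeq ω := rfl
        have hlen : (i :: ω).length = ω.length + 1 := rfl
        rw [hris, hlen, Finset.prod_range_succ']
        simp only [List.getD_cons_succ, List.getD_cons_zero]
        by_cases h : t = (cs.wordProd ω)⁻¹ * cs.simple i * cs.wordProd ω
        · rw [if_pos (hcond.mpr h), if_pos h]
          simp [mul_assoc, mul_comm]
        · rw [if_neg (fun hh => h (hcond.mp hh)), if_neg h]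
          simp [mul_assoc, mul_comm]

/-- The sign of `t` with respect to `w`. -/
noncomputable def nuSign (w t : W) : ℤˣ := ((Theta cs w) (t, 1)).2

lemma Theta_apply (w t : W) (ε : ℤˣ) :
    (Theta cs w) (t, ε) = (w * t * w⁻¹, ε * nuSign cs w t) := by
  obtain ⟨ω, rfl⟩ := cs.wordProd_surjective w
  have h1 : nuSign cs (cs.wordProd ω) t
      = ∏ k ∈ Finset.range ω.length,
          (if t = (cs.rightInvSeq ω).getD k 1 then (-1 : ℤˣ) else 1) := by
    rw [nuSign, Theta_wordProd, one_mul]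
  rw [Theta_wordProd, h1]

lemma nuSign_wordProd (ω : List B) (t : W) :
    nuSign cs (cs.wordProd ω) t = ∏ k ∈ Finset.range ω.length,
      (if t = (cs.rightInvSeq ω).getD k 1 then (-1 : ℤˣ) else 1) := by
  rw [nuSign, Theta_wordProd, one_mul]

lemma nuSign_mul (u v t : W) :
    nuSign cs (u * v) t = nuSign cs v t * nuSign cs u (v * t * v⁻¹) := by
  have h : (Theta cs (u * v)) (t, 1) = (Theta cs u) ((Theta cs v) (t, 1)) := by
    rw [map_mul]; rfl
  rw [Theta_apply, Theta_apply, Theta_apply] at h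
  have h2 := congrArg Prod.snd h
  simpa using h2

lemma nuSign_one (t : W) : nuSign cs 1 t = 1 := by
  simp [nuSign]

lemma nuSign_simple (i : B) (t : W) :
    nuSign cs (cs.simple i) t = if t = cs.simple i then -1 else 1 := by
  rw [nuSign, Theta_simple, eta_apply]

lemma nuSign_inv (u t : W) : nuSign cs u⁻¹ t = nuSign cs u (u⁻¹ * t * u) := by
  have h := nuSign_mul cs u u⁻¹ t
  rw [mul_inv_cancel, inv_inv, nuSign_one] at h
  exact (eq_inv_of_mul_eq_one_left h.symm).trans (Int.units_inv_eq_self _)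

lemma nuSign_refl_self (t : W) (ht : cs.IsReflection t) : nuSign cs t t = -1 := by
  obtain ⟨w, i, rfl⟩ := ht
  have key : w * cs.simple i * w⁻¹ = (w * cs.simple i) * w⁻¹ := by rw [mul_assoc]
  rw [key, nuSign_mul]
  have h1 : w⁻¹ * (w * cs.simple i * w⁻¹) * w⁻¹⁻¹ = cs.simple i := by
    simp [mul_assoc]
  rw [h1, nuSign_mul, nuSign_simple, if_pos rfl]
  have h2 : cs.simple i * cs.simple i * (cs.simple i)⁻¹ = cs.simple i := by simp
  rw [h2, nuSign_inv]
  have h3 : w⁻¹ * (w * cs.simple i * w⁻¹) * w = cs.simple i := by simp [mul_assoc]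
  rw [h3]
  have hsq := Int.units_mul_self (nuSign cs w (cs.simple i))
  calc nuSign cs w (cs.simple i) * (-1 * nuSign cs w (cs.simple i))
      = -(nuSign cs w (cs.simple i) * nuSign cs w (cs.simple i)) := by
        rw [neg_one_mul, mul_neg]
    _ = -1 := by rw [hsq]

lemma nuSign_mul_refl (w t : W) (ht : cs.IsReflection t) :
    nuSign cs (w * t) t = - nuSign cs w t := by
  rw [nuSign_mul]
  have h : t * t * t⁻¹ = t := by simp
  rw [h, nuSign_refl_self cs t ht, neg_one_mul]

lemma descent_of_nuSign_neg (w t : W) (ht : cs.IsReflection t)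
    (h : nuSign cs w t = -1) : cs.length (w * t) < cs.length w := by
  classical
  · obtain ⟨ω, hlen, hw⟩ := cs.exists_reduced_word w
    have hred : cs.IsReduced ω := hlen
    rw [hw, nuSign_wordProd] at h
    have hex : ∃ k ∈ Finset.range ω.length, t = (cs.rightInvSeq ω).getD k 1 := by
      by_contra hc
      push_neg at hc
      rw [Finset.prod_congr rfl (fun k hk => if_neg (hc k hk))] at h
      simp at h
    obtain ⟨k, hk, htk⟩ := hex
    rw [Finset.mem_range] at hk
    have hmem : t ∈ cs.rightInvSeq ω := by
      rw [htk]
      have hklen : k < (cs.rightInvSeq ω).length := by rwa [cs.length_rightInvSeq]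
      rw [List.getD_eq_getElem _ _ hklen]
      exact List.getElem_mem _
    have := cs.isRightInversion_of_mem_rightInvSeq hred hmem
    rw [hw]
    exact this.2

lemma nuSign_neg_iff (w t : W) (ht : cs.IsReflection t) :
    nuSign cs w t = -1 ↔ cs.length (w * t) < cs.length w := by
  constructor
  · exact descent_of_nuSign_neg cs w t ht
  · intro h
    by_contra hc
    have h1 : nuSign cs w t = 1 := by
      rcases Int.units_eq_one_or (nuSign cs w t) with h' | h'
      · exact h'
      · exact absurd h' hc
    have h2 : nuSign cs (w * t) t = -1 := by
      rw [nuSign_mul_refl cs w t ht, h1]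
    have h3 := descent_of_nuSign_neg cs (w * t) t ht h2
    rw [mul_assoc, ht.mul_self, mul_one] at h3
    omega

/-- The (strong) exchange property for simple reflections. -/
lemma exchange {ω : List B} {i : B}
    (h : cs.length (cs.wordProd ω * cs.simple i) < cs.length (cs.wordProd ω)) :
    ∃ k < ω.length, cs.wordProd ω * cs.simple i = cs.wordProd (ω.eraseIdx k) := by
  have hneg : nuSign cs (cs.wordProd ω) (cs.simple i) = -1 :=
    (nuSign_neg_iff cs _ _ (cs.isReflection_simple i)).mpr h
  rw [nuSign_wordProd] at hneg
  have hex : ∃ k ∈ Finset.range ω.length,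
      cs.simple i = (cs.rightInvSeq ω).getD k 1 := by
    by_contra hc
    push_neg at hc
    rw [Finset.prod_congr rfl (fun k hk => if_neg (hc k hk))] at hneg
    simp at hneg
  obtain ⟨k, hk, htk⟩ := hex
  rw [Finset.mem_range] at hk
  refine ⟨k, hk, ?_⟩
  rw [htk]
  exact cs.wordProd_mul_getD_rightInvSeq ω k

/-- The lifting lemma: if `ℓ(s i * w) = ℓ(w) + 1`, `ℓ(w * s j) = ℓ(w) + 1` and
`ℓ(s i * w * s j) ≤ ℓ(w) + 1`, then `s i * w = w * s j`. -/
lemma lifting {i j : B} {w : W}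
    (h1 : cs.length (cs.simple i * w) = cs.length w + 1)
    (h2 : cs.length (w * cs.simple j) = cs.length w + 1)
    (h3 : cs.length (cs.simple i * w * cs.simple j) ≤ cs.length w + 1) :
    cs.simple i * w = w * cs.simple j := by
  obtain ⟨ω, hlen, hw⟩ := cs.exists_reduced_word w
  have hu : cs.simple i * w = cs.wordProd (i :: ω) := by rw [cs.wordProd_cons, hw]
  have hulen : cs.length (cs.wordProd (i :: ω)) = cs.length w + 1 := by rw [← hu]; exact h1
  have hdesc : cs.length (cs.wordProd (i :: ω) * cs.simple j)
      < cs.length (cs.wordProd (i :: ω)) := by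
    rw [hulen, ← hu]
    rcases Nat.lt_or_ge (cs.length (cs.simple i * w * cs.simple j)) (cs.length w + 1) with
      hlt | hge
    · exact hlt
    · have heq : cs.length (cs.simple i * w * cs.simple j) = cs.length w + 1 := le_antisymm h3 hge
      have := cs.length_mul_simple_ne (cs.simple i * w) j
      rw [heq, h1] at this
      exact absurd rfl this
  obtain ⟨k, hk, hdel⟩ := exchange cs hdesc
  match k, hk with
  | 0, _ =>
      rw [List.eraseIdx_cons_zero, ← hu, ← hw] at hdel
      have h4 := congrArg (· * cs.simple j) hdel
      rw [mul_assoc (cs.simple i * w), cs.simple_mul_simple_self, mul_one] at h4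
      exact h4
  | (k' + 1), hk =>
      exfalso
      rw [List.eraseIdx_cons_succ, cs.wordProd_cons, cs.wordProd_cons, ← hw] at hdel
      have hcanc : w * cs.simple j = cs.wordProd (ω.eraseIdx k') := by
        rw [mul_assoc] at hdel
        exact mul_left_cancel hdel
      have hk' : k' < ω.length := by simpa using hk
      have hle : cs.length (w * cs.simple j) ≤ (ω.eraseIdx k').length := by
        rw [hcanc]; exact cs.length_wordProd_le _
      have heq := List.length_eraseIdx_add_one hk'
      have hlen2 : cs.length w = ω.length := by rw [hw]; exact hlen
      omega

section Twist

variable (st : W ≃* W)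

lemma length_st_le (hS : ∀ i : B, ∃ j : B, st (cs.simple i) = cs.simple j) (w : W) :
    cs.length (st w) ≤ cs.length w := by
  obtain ⟨ω, hlen, hw⟩ := cs.exists_reduced_word w
  have key : ∀ ω' : List B, ∃ τ : List B, τ.length = ω'.length ∧
      st (cs.wordProd ω') = cs.wordProd τ := by
    intro ω'
    induction ω' with
    | nil => exact ⟨[], rfl, by simp⟩
    | cons i ω' ih =>
        obtain ⟨τ, hτlen, hτ⟩ := ih
        obtain ⟨j, hj⟩ := hS i
        refine ⟨j :: τ, by simp [hτlen], ?_⟩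
        rw [cs.wordProd_cons, cs.wordProd_cons, map_mul, hj, hτ]
  obtain ⟨τ, hτlen, hτ⟩ := key ω
  have h1 : cs.length (st w) ≤ τ.length := by
    rw [hw, hτ]; exact cs.length_wordProd_le τ
  have hlen2 : cs.length w = ω.length := by rw [hw]; exact hlen
  rw [hτlen, ← hlen2] at h1
  exact h1

lemma length_st (hinv : ∀ w, st (st w) = w)
    (hS : ∀ i : B, ∃ j : B, st (cs.simple i) = cs.simple j) (w : W) :
    cs.length (st w) = cs.length w := by
  refine le_antisymm (length_st_le cs st hS w) ?_
  have := length_st_le cs st hS (st w)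
  rwa [hinv] at this

/-- For a twisted involution `z`, `ℓ(z ⋅ st(s i)) = ℓ(s i ⋅ z)`. -/
lemma length_mul_st (hinv : ∀ w, st (st w) = w)
    (hS : ∀ i : B, ∃ j : B, st (cs.simple i) = cs.simple j)
    {z : W} (hz : st z = z⁻¹) (i : B) :
    cs.length (z * st (cs.simple i)) = cs.length (cs.simple i * z) := by
  calc cs.length (z * st (cs.simple i))
      = cs.length (st (z * st (cs.simple i))) := (length_st cs st hinv hS _).symm
    _ = cs.length (st z * st (st (cs.simple i))) := by rw [map_mul]
    _ = cs.length (z⁻¹ * cs.simple i) := by rw [hz, hinv]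
    _ = cs.length ((z⁻¹ * cs.simple i)⁻¹) := (cs.length_inv _).symm
    _ = cs.length (cs.simple i * z) := by rw [mul_inv_rev, inv_inv, cs.inv_simple]

lemma mem_comm {z : W} (hz : st z = z⁻¹) {i : B}
    (hc : cs.simple i * z = z * st (cs.simple i)) :
    st (cs.simple i * z) = (cs.simple i * z)⁻¹ := by
  have hst : st (cs.simple i) = z⁻¹ * (cs.simple i * z) := by
    rw [hc]; simp [mul_assoc]
  rw [map_mul, hz, mul_inv_rev, hst]
  calc z⁻¹ * (cs.simple i * z) * z⁻¹ = z⁻¹ * (cs.simple i * (z * z⁻¹)) := by simp [mul_assoc]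
    _ = z⁻¹ * cs.simple i := by simp
    _ = z⁻¹ * (cs.simple i)⁻¹ := by rw [cs.inv_simple]

lemma mem_conj (hinv : ∀ w, st (st w) = w)
    (hS : ∀ i : B, ∃ j : B, st (cs.simple i) = cs.simple j)
    {z : W} (hz : st z = z⁻¹) (i : B) :
    st (cs.simple i * z * st (cs.simple i)) = (cs.simple i * z * st (cs.simple i))⁻¹ := by
  obtain ⟨j, hj⟩ := hS i
  rw [map_mul, map_mul, hz, hinv, mul_inv_rev, mul_inv_rev, hj, cs.inv_simple, cs.inv_simple,
    mul_assoc]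

/-- If `z` is a twisted involution with `s i * z ≠ z * st (s i)` and
`ℓ(s i * z) = ℓ(z) + 1`, then `ℓ(s i * z * st (s i)) = ℓ(z) + 2`. -/
lemma length_conj_asc (hinv : ∀ w, st (st w) = w)
    (hS : ∀ i : B, ∃ j : B, st (cs.simple i) = cs.simple j)
    {z : W} (hz : st z = z⁻¹) {i : B}
    (hnc : cs.simple i * z ≠ z * st (cs.simple i))
    (ha : cs.length (cs.simple i * z) = cs.length z + 1) :
    cs.length (cs.simple i * z * st (cs.simple i)) = cs.length z + 2 := by
  obtain ⟨j, hj⟩ := hS i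
  rw [hj]
  rcases cs.length_mul_simple (cs.simple i * z) j with h | h
  · rw [h, ha]
  · exfalso
    apply hnc
    have h2 : cs.length (z * cs.simple j) = cs.length z + 1 := by
      rw [← hj, length_mul_st cs st hinv hS hz, ha]
    have h3 : cs.length (cs.simple i * z * cs.simple j) ≤ cs.length z + 1 := by omega
    rw [hj]
    exact lifting cs ha h2 h3

/-- If `z` is a twisted involution with `s i * z ≠ z * st (s i)` and
`ℓ(s i * z) + 1 = ℓ(z)`, then `ℓ(s i * z * st (s i)) + 2 = ℓ(z)`. -/
lemma length_conj_desc (hinv : ∀ w, st (st w) = w)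
    (hS : ∀ i : B, ∃ j : B, st (cs.simple i) = cs.simple j)
    {z : W} (hz : st z = z⁻¹) {i : B}
    (hnc : cs.simple i * z ≠ z * st (cs.simple i))
    (hd : cs.length (cs.simple i * z) + 1 = cs.length z) :
    cs.length (cs.simple i * z * st (cs.simple i)) + 2 = cs.length z := by
  obtain ⟨j, hj⟩ := hS i
  rw [hj]
  rcases cs.length_mul_simple (cs.simple i * z) j with h | h
  · exfalso
    apply hnc
    have hsw : cs.simple i * (cs.simple i * z) = z := by
      rw [← mul_assoc, cs.simple_mul_simple_self, one_mul]
    have h1 : cs.length (cs.simple i * (cs.simple i * z))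
        = cs.length (cs.simple i * z) + 1 := by rw [hsw]; omega
    have h3 : cs.length (cs.simple i * (cs.simple i * z) * cs.simple j)
        ≤ cs.length (cs.simple i * z) + 1 := by
      have e : cs.simple i * (cs.simple i * z) * cs.simple j = z * cs.simple j := by rw [hsw]
      rw [e, ← hj, length_mul_st cs st hinv hS hz]
      omega
    have hlift := lifting cs h1 h h3
    rw [hsw] at hlift
    have h5 := congrArg (fun x => cs.simple i * x) hlift
    rw [← mul_assoc, ← mul_assoc, cs.simple_mul_simple_self, one_mul, ← hj] at h5
    exact h5
  · omega

end Twist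

section Main

variable (st : W ≃* W)

lemma finite_length_le' [Finite B] (n : ℕ) : {w : W | cs.length w ≤ n}.Finite := by
  have hsub : {w : W | cs.length w ≤ n} ⊆ cs.wordProd '' {ω : List B | ω.length ≤ n} := by
    intro w hw
    obtain ⟨ω, hlen, hword⟩ := cs.exists_reduced_word w
    simp only [Set.mem_setOf_eq] at hw
    have hlen2 : cs.length w = ω.length := by rw [hword]; exact hlen
    exact ⟨ω, by simp only [Set.mem_setOf_eq]; omega, hword.symm⟩
  exact Set.Finite.subset ((List.finite_length_le B n).image _) hsub

variable (hinv : ∀ w, st (st w) = w)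
variable (hS : ∀ i : B, ∃ j : B, st (cs.simple i) = cs.simple j)

/-- The involution `z ↦ s i * z` (commuting case) or `z ↦ s i * z * st (s i)`. -/
noncomputable def phi (i : B) (z : {z : W // st z = z⁻¹}) : {z : W // st z = z⁻¹} :=
  if h : cs.simple i * z.1 = z.1 * st (cs.simple i) then
    ⟨cs.simple i * z.1, mem_comm cs st z.2 h⟩
  else
    ⟨cs.simple i * z.1 * st (cs.simple i), mem_conj cs st hinv hS z.2 i⟩

noncomputable def alphaP (i : B) (z : {z : W // st z = z⁻¹}) : Polynomial ℤ :=
  if cs.simple i * z.1 = z.1 * st (cs.simple i) then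
    (if cs.length z.1 < cs.length (cs.simple i * z.1) then X else X ^ 2 - X - 1)
  else
    (if cs.length z.1 < cs.length (cs.simple i * z.1) then 0 else X ^ 2 - 1)

noncomputable def betaP (i : B) (z : {z : W // st z = z⁻¹}) : Polynomial ℤ :=
  if cs.simple i * z.1 = z.1 * st (cs.simple i) then
    (if cs.length z.1 < cs.length (cs.simple i * z.1) then X + 1 else X ^ 2 - X)
  else
    (if cs.length z.1 < cs.length (cs.simple i * z.1) then 1 else X ^ 2)

variable {i : B} {j : B} (hj : st (cs.simple i) = cs.simple j)

lemma st_simple_sq (hj : st (cs.simple i) = cs.simple j) :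
    st (cs.simple i) * st (cs.simple i) = 1 := by
  rw [hj]; exact cs.simple_mul_simple_self j

lemma phi_comm_val {z : {z : W // st z = z⁻¹}}
    (h : cs.simple i * z.1 = z.1 * st (cs.simple i)) :
    phi cs st hinv hS i z = ⟨cs.simple i * z.1, mem_comm cs st z.2 h⟩ := dif_pos h

lemma phi_conj_val {z : {z : W // st z = z⁻¹}}
    (h : ¬ (cs.simple i * z.1 = z.1 * st (cs.simple i))) :
    phi cs st hinv hS i z
      = ⟨cs.simple i * z.1 * st (cs.simple i), mem_conj cs st hinv hS z.2 i⟩ := dif_neg h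

lemma comm_phi_comm (hj : st (cs.simple i) = cs.simple j) {z : {z : W // st z = z⁻¹}}
    (h : cs.simple i * z.1 = z.1 * st (cs.simple i)) :
    cs.simple i * (cs.simple i * z.1) = (cs.simple i * z.1) * st (cs.simple i) := by
  rw [← mul_assoc, cs.simple_mul_simple_self, one_mul, h, mul_assoc,
    st_simple_sq cs st hj, mul_one]

lemma conj_phi_conj (hj : st (cs.simple i) = cs.simple j) {z : {z : W // st z = z⁻¹}}
    (h : ¬ (cs.simple i * z.1 = z.1 * st (cs.simple i))) :
    ¬ (cs.simple i * (cs.simple i * z.1 * st (cs.simple i))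
        = (cs.simple i * z.1 * st (cs.simple i)) * st (cs.simple i)) := by
  intro hcontra
  apply h
  have e1 : cs.simple i * (cs.simple i * z.1 * st (cs.simple i)) = z.1 * st (cs.simple i) := by
    rw [← mul_assoc, ← mul_assoc, cs.simple_mul_simple_self, one_mul]
  have e2 : (cs.simple i * z.1 * st (cs.simple i)) * st (cs.simple i) = cs.simple i * z.1 := by
    rw [mul_assoc, st_simple_sq cs st hj, mul_one]
  rw [e1, e2] at hcontra
  exact hcontra.symm

lemma phi_phi (hj : st (cs.simple i) = cs.simple j) (z : {z : W // st z = z⁻¹}) :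
    phi cs st hinv hS i (phi cs st hinv hS i z) = z := by
  by_cases h : cs.simple i * z.1 = z.1 * st (cs.simple i)
  · rw [phi_comm_val cs st hinv hS h]
    rw [phi_comm_val cs st hinv hS (comm_phi_comm cs st hj h)]
    apply Subtype.ext
    show cs.simple i * (cs.simple i * z.1) = z.1
    rw [← mul_assoc, cs.simple_mul_simple_self, one_mul]
  · rw [phi_conj_val cs st hinv hS h]
    rw [phi_conj_val cs st hinv hS (conj_phi_conj cs st hj h)]
    apply Subtype.ext
    show cs.simple i * (cs.simple i * z.1 * st (cs.simple i)) * st (cs.simple i) = z.1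
    rw [← mul_assoc, ← mul_assoc, cs.simple_mul_simple_self, one_mul, mul_assoc,
      st_simple_sq cs st hj, mul_one]

lemma phi_length_ge (hj : st (cs.simple i) = cs.simple j) (z : {z : W // st z = z⁻¹}) :
    cs.length z.1 ≤ cs.length (phi cs st hinv hS i z).1 + 2 := by
  by_cases h : cs.simple i * z.1 = z.1 * st (cs.simple i)
  · rw [phi_comm_val cs st hinv hS h]
    rcases cs.length_simple_mul z.1 i with h' | h' <;> simp only <;> omega
  · rw [phi_conj_val cs st hinv hS h]
    simp only
    rw [hj]
    rcases cs.length_simple_mul z.1 i with h' | h' <;>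
      rcases cs.length_mul_simple (cs.simple i * z.1) j with h'' | h'' <;> omega

/-- The coefficient identity `α z + β (φ z) = X ^ 2`. -/
lemma coef_eq (hj : st (cs.simple i) = cs.simple j) (z : {z : W // st z = z⁻¹}) :
    alphaP cs st i z + betaP cs st i (phi cs st hinv hS i z) = X ^ 2 := by
  by_cases h : cs.simple i * z.1 = z.1 * st (cs.simple i)
  · rw [phi_comm_val cs st hinv hS h]
    have hcomm2 := comm_phi_comm cs st hj h
    by_cases hasc : cs.length z.1 < cs.length (cs.simple i * z.1)
    · -- ascent: α = X, β (φ z) = X² - X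
      have hlen : ¬ (cs.length (cs.simple i * z.1)
          < cs.length (cs.simple i * (cs.simple i * z.1))) := by
        have e : cs.simple i * (cs.simple i * z.1) = z.1 := by
          rw [← mul_assoc, cs.simple_mul_simple_self, one_mul]
        rw [e]; omega
      rw [alphaP, betaP, if_pos h, if_pos hasc]
      simp only
      rw [if_pos hcomm2, if_neg hlen]
      ring
    · have hlen : cs.length (cs.simple i * z.1)
          < cs.length (cs.simple i * (cs.simple i * z.1)) := by
        have e : cs.simple i * (cs.simple i * z.1) = z.1 := by
          rw [← mul_assoc, cs.simple_mul_simple_self, one_mul]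
        rw [e]
        rcases cs.length_simple_mul z.1 i with h' | h' <;> omega
      rw [alphaP, betaP, if_pos h, if_neg hasc]
      simp only
      rw [if_pos hcomm2, if_pos hlen]
      ring
  · rw [phi_conj_val cs st hinv hS h]
    have hnc2 := conj_phi_conj cs st hj h
    have e1 : cs.simple i * (cs.simple i * z.1 * st (cs.simple i)) = z.1 * st (cs.simple i) := by
      rw [← mul_assoc, ← mul_assoc, cs.simple_mul_simple_self, one_mul]
    have hzt : cs.length (z.1 * st (cs.simple i)) = cs.length (cs.simple i * z.1) :=
      length_mul_st cs st hinv hS z.2 i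
    by_cases hasc : cs.length z.1 < cs.length (cs.simple i * z.1)
    · -- ascent: α = 0, β (φ z) = X²
      have ha : cs.length (cs.simple i * z.1) = cs.length z.1 + 1 := by
        rcases cs.length_simple_mul z.1 i with h' | h' <;> omega
      have hconj := length_conj_asc cs st hinv hS z.2 h ha
      have hlen : ¬ (cs.length (cs.simple i * z.1 * st (cs.simple i))
          < cs.length (cs.simple i * (cs.simple i * z.1 * st (cs.simple i)))) := by
        rw [e1, hzt]; omega
      rw [alphaP, betaP, if_neg h, if_pos hasc]
      simp only
      rw [if_neg hnc2, if_neg hlen]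
      ring
    · have hd : cs.length (cs.simple i * z.1) + 1 = cs.length z.1 := by
        rcases cs.length_simple_mul z.1 i with h' | h' <;> omega
      have hconj := length_conj_desc cs st hinv hS z.2 h hd
      have hlen : cs.length (cs.simple i * z.1 * st (cs.simple i))
          < cs.length (cs.simple i * (cs.simple i * z.1 * st (cs.simple i))) := by
        rw [e1, hzt]; omega
      rw [alphaP, betaP, if_neg h, if_neg hasc]
      simp only
      rw [if_neg hnc2, if_pos hlen]
      ring

lemma rec_eq {P : {z : W // st z = z⁻¹} → W → Polynomial ℤ} (hP : XRec cs st P)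
    {y : W} (hdesc : cs.length (y * cs.simple i) < cs.length y)
    (z : {z : W // st z = z⁻¹}) :
    P z y = alphaP cs st i z * P z (y * cs.simple i)
      + betaP cs st i z * P (phi cs st hinv hS i z) (y * cs.simple i) := by
  obtain ⟨c1, c2, c3, c4⟩ := hP.2 i y hdesc z
  by_cases hc : cs.simple i * z.1 = z.1 * st (cs.simple i)
  · rw [phi_comm_val cs st hinv hS hc]
    rcases cs.length_simple_mul z.1 i with ha | hd
    · have hlt : cs.length z.1 < cs.length (cs.simple i * z.1) := by omega
      have heq := c1 hc hlt (mem_comm cs st z.2 hc)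
      simp only [alphaP, betaP, if_pos hc, if_pos hlt]
      exact heq
    · have hlt : ¬ (cs.length z.1 < cs.length (cs.simple i * z.1)) := by omega
      have heq := c2 hc (by omega) (mem_comm cs st z.2 hc)
      simp only [alphaP, betaP, if_pos hc, if_neg hlt]
      exact heq
  · rw [phi_conj_val cs st hinv hS hc]
    rcases cs.length_simple_mul z.1 i with ha | hd
    · have hlt : cs.length z.1 < cs.length (cs.simple i * z.1) := by omega
      have heq := c3 hc hlt (mem_conj cs st hinv hS z.2 i)
      simp only [alphaP, betaP, if_neg hc, if_pos hlt]
      rw [zero_mul, one_mul, zero_add]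
      exact heq
    · have hlt : ¬ (cs.length z.1 < cs.length (cs.simple i * z.1)) := by omega
      have heq := c4 hc (by omega) (mem_conj cs st hinv hS z.2 i)
      simp only [alphaP, betaP, if_neg hc, if_neg hlt]
      exact heq

end Main

end StCox


/-- **1.3(b).** For any `y ∈ W`, `Σ_{z ∈ I_*} X^z_y = u^{2 l(y)}`, the sum having
finitely many nonzero terms; indeed `X^z_y = 0` whenever `l(z) > 2 l(y)`. -/
theorem statement7 {B W : Type} [Group W] [Finite B] {M : CoxeterMatrix B}
    (cs : CoxeterSystem M W) (st : W ≃* W)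
    (hst_inv : ∀ w, st (st w) = w)
    (hst_S : ∀ i : B, ∃ j : B, st (cs.simple i) = cs.simple j)
    (P : {z : W // st z = z⁻¹} → W → Polynomial ℤ) (hP : XRec cs st P) (y : W) :
    (∀ z : {z : W // st z = z⁻¹}, 2 * cs.length y < cs.length z.1 → P z y = 0) ∧
    ∑ᶠ z : {z : W // st z = z⁻¹}, P z y = X ^ (2 * cs.length y) := by
  open StCox in
  suffices KEY : ∀ (n : ℕ) (y : W), cs.length y = n →
      ((∀ z : {z : W // st z = z⁻¹}, 2 * cs.length y < cs.length z.1 → P z y = 0) ∧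
        ∑ᶠ z : {z : W // st z = z⁻¹}, P z y = X ^ (2 * cs.length y)) by
    exact KEY (cs.length y) y rfl
  intro n
  induction n with
  | zero =>
      intro y hy
      have hy1 : y = 1 := cs.length_eq_zero_iff.mp hy
      subst hy1
      have hone : st (1 : W) = (1 : W)⁻¹ := by simp
      constructor
      · intro z hz
        rw [hP.1 z, if_neg]
        intro h1
        rw [h1, cs.length_one] at hz
        omega
      · rw [hy]
        have : ∑ᶠ z : {z : W // st z = z⁻¹}, P z 1 = P ⟨1, hone⟩ 1 := by
          apply finsum_eq_single
          intro x hx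
          rw [hP.1 x, if_neg]
          intro h1
          exact hx (Subtype.ext h1)
        rw [this, hP.1 ⟨1, hone⟩, if_pos rfl]
        simp
  | succ n ih =>
      intro y hy
      have hyne : y ≠ 1 := by
        intro h; rw [h, cs.length_one] at hy; omega
      obtain ⟨i, hi⟩ := cs.exists_rightDescent_of_ne_one hyne
      have hdesc : cs.length (y * cs.simple i) < cs.length y := hi
      obtain ⟨j, hj⟩ := hst_S i
      have hy'len : cs.length (y * cs.simple i) = n := by
        have := (cs.isRightDescent_iff).mp hi
        omega
      obtain ⟨ihV, ihS⟩ := ih (y * cs.simple i) hy'len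
      set g : {z : W // st z = z⁻¹} → Polynomial ℤ := fun z => P z (y * cs.simple i) with hgdef
      set φ : {z : W // st z = z⁻¹} → {z : W // st z = z⁻¹} := StCox.phi cs st hst_inv hst_S i with hφdef
      have hrec : ∀ z : {z : W // st z = z⁻¹}, P z y = StCox.alphaP cs st i z * g z + StCox.betaP cs st i z * g (φ z) :=
        fun z => StCox.rec_eq cs st hst_inv hst_S hP hdesc z
      have hφφ : ∀ z : {z : W // st z = z⁻¹}, φ (φ z) = z := StCox.phi_phi cs st hst_inv hst_S hj
      have hgvanish : ∀ z : {z : W // st z = z⁻¹}, 2 * n < cs.length z.1 → g z = 0 := by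
        intro z hz
        apply ihV z
        omega
      have hgfin : (Function.support g).Finite := by
        have hfin1 : ((Subtype.val ⁻¹' {w : W | cs.length w ≤ 2 * n}) : Set {z : W // st z = z⁻¹}).Finite :=
          (StCox.finite_length_le' cs (2 * n)).preimage (Subtype.val_injective.injOn)
        apply Set.Finite.subset hfin1
        intro z hz
        simp only [Function.mem_support] at hz
        simp only [Set.mem_preimage, Set.mem_setOf_eq]
        by_contra hcon
        exact hz (hgvanish z (by omega))
      have he : Function.Involutive φ := hφφ
      have hφinj : Function.Injective φ := he.injective
      have hvan : ∀ z : {z : W // st z = z⁻¹}, 2 * cs.length y < cs.length z.1 → P z y = 0 := by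
        intro z hz
        rw [hrec z]
        have h1 : g z = 0 := hgvanish z (by omega)
        have h2 : g (φ z) = 0 := by
          apply hgvanish
          have := StCox.phi_length_ge cs st hst_inv hst_S hj z
          rw [← hφdef] at this
          omega
        rw [h1, h2, mul_zero, mul_zero, add_zero]
      refine ⟨hvan, ?_⟩
      have hfa : (Function.support (fun z : {z : W // st z = z⁻¹} => StCox.alphaP cs st i z * g z)).Finite := by
        apply Set.Finite.subset hgfin
        intro z hz
        simp only [Function.mem_support] at hz ⊢
        intro h0
        exact hz (by rw [h0, mul_zero])
      have hfb : (Function.support (fun z : {z : W // st z = z⁻¹} => StCox.betaP cs st i z * g (φ z))).Finite := by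
        apply Set.Finite.subset (hgfin.preimage hφinj.injOn)
        intro z hz
        simp only [Function.mem_support] at hz
        simp only [Set.mem_preimage, Function.mem_support]
        intro h0
        exact hz (by rw [h0, mul_zero])
      have hfb' : (Function.support (fun z : {z : W // st z = z⁻¹} => StCox.betaP cs st i (φ z) * g z)).Finite := by
        apply Set.Finite.subset hgfin
        intro z hz
        simp only [Function.mem_support] at hz ⊢
        intro h0
        exact hz (by rw [h0, mul_zero])
      have hreindex : ∑ᶠ z : {z : W // st z = z⁻¹}, StCox.betaP cs st i z * g (φ z)
          = ∑ᶠ z : {z : W // st z = z⁻¹}, StCox.betaP cs st i (φ z) * g z := by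
        rw [← finsum_comp_equiv (he.toPerm φ)
          (f := fun w : {z : W // st z = z⁻¹} => StCox.betaP cs st i w * g (φ w))]
        apply finsum_congr
        intro z
        show StCox.betaP cs st i (φ z) * g (φ (φ z)) = StCox.betaP cs st i (φ z) * g z
        rw [hφφ z]
      calc ∑ᶠ z : {z : W // st z = z⁻¹}, P z y
          = ∑ᶠ z : {z : W // st z = z⁻¹}, (StCox.alphaP cs st i z * g z + StCox.betaP cs st i z * g (φ z)) :=
            finsum_congr hrec
        _ = (∑ᶠ z : {z : W // st z = z⁻¹}, StCox.alphaP cs st i z * g z)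
            + ∑ᶠ z : {z : W // st z = z⁻¹}, StCox.betaP cs st i z * g (φ z) := finsum_add_distrib hfa hfb
        _ = (∑ᶠ z : {z : W // st z = z⁻¹}, StCox.alphaP cs st i z * g z)
            + ∑ᶠ z : {z : W // st z = z⁻¹}, StCox.betaP cs st i (φ z) * g z := by rw [hreindex]
        _ = ∑ᶠ z : {z : W // st z = z⁻¹}, (StCox.alphaP cs st i z * g z + StCox.betaP cs st i (φ z) * g z) :=
            (finsum_add_distrib hfa hfb').symm
        _ = ∑ᶠ z : {z : W // st z = z⁻¹}, (X : Polynomial ℤ) ^ 2 * g z := by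
            apply finsum_congr
            intro z
            rw [← add_mul]
            rw [StCox.coef_eq cs st hst_inv hst_S hj z]
        _ = (X : Polynomial ℤ) ^ 2 * ∑ᶠ z : {z : W // st z = z⁻¹}, g z := (mul_finsum g _).symm
        _ = X ^ (2 * cs.length y) := by
            rw [ihS, hy'len, hy, ← pow_add]
            congr 1
            omega
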